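/- Let μ and ν be Borel probability measures on ℝ and let z ∈ ℂ⁺. Then G_ν(z) ≠ 0, the point 1/G_ν(z) lies in ℂ⁺, and ∫_{ℝ×ℝ} 1/((z−y)(1−x·G_ν(z))) d(μ⊗ν)(x,y) = G_μ(1/G_ν(z)). (This is the Cauchy-transform computation showing that the sum of two monotonically independent self-adjoint operators with distributions μ and ν has Cauchy transform G_μ ∘ F_ν, the additive monotone convolution.) -/

import Mathlib

open MeasureTheory

/-- The Cauchy transform `G_ρ(z) = ∫ 1/(z−t) dρ(t)` of a measure on `ℝ`. -/
noncomputable def cauchyTransform (ρ : Measure ℝ) (z : ℂ) : ℂ := ∫ t, (z - (t : ℂ))⁻¹ ∂ρ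

lemma resolvent_ne_zero {w : ℂ} (hw : w.im ≠ 0) (t : ℝ) : w - (t : ℂ) ≠ 0 := by
  intro h
  apply hw
  have := congrArg Complex.im h
  simpa using this

lemma resolvent_integrable (ρ : Measure ℝ) [IsFiniteMeasure ρ] {w : ℂ} (hw : w.im ≠ 0) :
    Integrable (fun t : ℝ => (w - (t : ℂ))⁻¹) ρ := by
  have hcont : Continuous fun t : ℝ => (w - (t : ℂ))⁻¹ :=
    Continuous.inv₀ (by continuity) (resolvent_ne_zero hw)
  refine (integrable_const (|w.im|⁻¹)).mono' hcont.aestronglyMeasurable ?_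
  filter_upwards with t
  rw [norm_inv]
  refine inv_anti₀ (abs_pos.mpr hw) ?_
  calc |w.im| = |(w - (t : ℂ)).im| := by simp
    _ ≤ ‖w - (t : ℂ)‖ := Complex.abs_im_le_norm _

lemma cauchy_im_neg (ρ : Measure ℝ) [IsProbabilityMeasure ρ] {w : ℂ} (hw : 0 < w.im) :
    (cauchyTransform ρ w).im < 0 := by
  have hint := resolvent_integrable ρ (ne_of_gt hw)
  have key : (cauchyTransform ρ w).im = ∫ t, ((w - (t : ℂ))⁻¹).im ∂ρ :=
    (integral_im hint).symm
  have heq : (fun t : ℝ => ((w - (t : ℂ))⁻¹).im)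
      = fun t : ℝ => -(w.im / Complex.normSq (w - (t : ℂ))) := by
    funext t
    rw [Complex.inv_im]
    simp [neg_div]
  have h1 : Integrable (fun t : ℝ => ((w - (t : ℂ))⁻¹).im) ρ := hint.im
  rw [heq] at h1
  have hinteg : Integrable (fun t : ℝ => w.im / Complex.normSq (w - (t : ℂ))) ρ := by
    exact ((Integrable.neg h1).congr (Filter.Eventually.of_forall fun t => neg_neg _))
  rw [key, heq, integral_neg, neg_lt_zero]
  rw [integral_pos_iff_support_of_nonneg]
  · have hsupp : Function.support (fun t : ℝ => w.im / Complex.normSq (w - (t : ℂ)))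
        = Set.univ := by
      ext t
      simp only [Function.mem_support, Set.mem_univ, iff_true]
      have hn : Complex.normSq (w - (t : ℂ)) ≠ 0 :=
        (Complex.normSq_pos.mpr (resolvent_ne_zero (ne_of_gt hw) t)).ne'
      exact div_ne_zero (ne_of_gt hw) hn
    rw [hsupp]
    simp
  · intro t
    have hn : 0 < Complex.normSq (w - (t : ℂ)) :=
      Complex.normSq_pos.mpr (resolvent_ne_zero (ne_of_gt hw) t)
    positivity
  · exact hinteg

/-- For `z` in the upper half-plane, `G_ν(z) ≠ 0`, `1/G_ν(z)` lies in the upper half-plane, and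
`∫ 1/((z−y)(1−x·G_ν(z))) d(μ⊗ν)(x,y) = G_μ(1/G_ν(z))`: the Cauchy transform of the sum of two
monotonically independent self-adjoint operators is `G_μ ∘ F_ν`. -/
theorem monotone_additive_cauchy_transform
    (μ ν : Measure ℝ) [IsProbabilityMeasure μ] [IsProbabilityMeasure ν]
    (z : ℂ) (hz : 0 < z.im) :
    cauchyTransform ν z ≠ 0 ∧
    0 < ((cauchyTransform ν z)⁻¹).im ∧
    ∫ p : ℝ × ℝ, ((z - (p.2 : ℂ)) * (1 - (p.1 : ℂ) * cauchyTransform ν z))⁻¹ ∂(μ.prod ν)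
      = cauchyTransform μ ((cauchyTransform ν z)⁻¹) := by
  set G := cauchyTransform ν z with hGdef
  have hGim : G.im < 0 := cauchy_im_neg ν hz
  have hG0 : G ≠ 0 := fun h => by simp [h] at hGim
  have hwim : 0 < (G⁻¹).im := by
    rw [Complex.inv_im]
    have h1 : 0 < Complex.normSq G := Complex.normSq_pos.mpr hG0
    have : 0 < -G.im := by linarith
    positivity
  refine ⟨hG0, hwim, ?_⟩
  have hrw : ∀ p : ℝ × ℝ, ((z - (p.2 : ℂ)) * (1 - (p.1 : ℂ) * G))⁻¹
      = (fun x : ℝ => G⁻¹ * (G⁻¹ - (x : ℂ))⁻¹) p.1 * (fun y : ℝ => (z - (y : ℂ))⁻¹) p.2 := by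
    intro p
    have h1 : 1 - (p.1 : ℂ) * G = G * (G⁻¹ - (p.1 : ℂ)) := by
      field_simp
    rw [h1, mul_inv, mul_inv]
    ring
  calc ∫ p : ℝ × ℝ, ((z - (p.2 : ℂ)) * (1 - (p.1 : ℂ) * G))⁻¹ ∂(μ.prod ν)
      = ∫ p : ℝ × ℝ, (fun x : ℝ => G⁻¹ * (G⁻¹ - (x : ℂ))⁻¹) p.1
          * (fun y : ℝ => (z - (y : ℂ))⁻¹) p.2 ∂(μ.prod ν) := by
        exact integral_congr_ae (Filter.Eventually.of_forall fun p => hrw p)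
    _ = (∫ x : ℝ, G⁻¹ * (G⁻¹ - (x : ℂ))⁻¹ ∂μ) * ∫ y : ℝ, (z - (y : ℂ))⁻¹ ∂ν :=
        integral_prod_mul (fun x : ℝ => G⁻¹ * (G⁻¹ - (x : ℂ))⁻¹) (fun y : ℝ => (z - (y : ℂ))⁻¹)
    _ = (G⁻¹ * cauchyTransform μ G⁻¹) * G := by
        rw [integral_const_mul]
        rfl
    _ = cauchyTransform μ G⁻¹ := by
        field_simp
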